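/- Let T be a tree and k ≥ 0 an integer. If there exists a path P = (x₁,…,x_p) in T such that every connected component of T \ N[P] (the forest obtained by deleting the closed neighborhood of P) has linear MIM-width at most k, then the linear MIM-width of T is at most k+1. -/

import Mathlib

open scoped Classical

noncomputable section

namespace LMW

variable {V : Type*} [Fintype V]

/-- The bipartite graph `G[Vᵢ, V̄ᵢ]` consisting of the edges of `G` crossing the cut at
position `i` of the linear layout `σ` (here `Vᵢ` is the set of the first `i` vertices
in the layout). -/
def cutGraph (G : SimpleGraph V) (σ : V ≃ Fin (Fintype.card V)) (i : ℕ) : SimpleGraph V where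
  Adj u v := G.Adj u v ∧
    (((σ u : ℕ) < i ∧ i ≤ (σ v : ℕ)) ∨ ((σ v : ℕ) < i ∧ i ≤ (σ u : ℕ)))
  symm := by
    constructor
    intro u v h
    exact ⟨h.1.symm, h.2.symm⟩
  loopless := by
    constructor
    intro u h
    exact G.ne_of_adj h.1 rfl

/-- `M` is an induced matching in `H`: a set of edges of `H` such that any two distinct
edges of `M` share no endpoint and no endpoint of one is adjacent in `H` to an endpoint
of the other. -/
def IsInducedMatching (H : SimpleGraph V) (M : Finset (Sym2 V)) : Prop :=
  (↑M : Set (Sym2 V)) ⊆ H.edgeSet ∧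
    ∀ e ∈ M, ∀ f ∈ M, e ≠ f → ∀ u ∈ e, ∀ v ∈ f, u ≠ v ∧ ¬ H.Adj u v

/-- `mim H` is the size of a maximum induced matching of `H`. -/
def mim (H : SimpleGraph V) : ℕ :=
  sSup {n : ℕ | ∃ M : Finset (Sym2 V), IsInducedMatching H M ∧ M.card = n}

/-- The MIM-width of `G` under the linear layout `σ`: the maximum over all cuts
`1 ≤ i < |V|` of the size of a maximum induced matching of the cut graph. -/
def mw (G : SimpleGraph V) (σ : V ≃ Fin (Fintype.card V)) : ℕ :=
  (Finset.Ico 1 (Fintype.card V)).sup fun i => mim (cutGraph G σ i)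

/-- The linear MIM-width of `G`: the minimum of `mw G σ` over all linear layouts `σ`. -/
def lmw (G : SimpleGraph V) : ℕ :=
  sInf {m : ℕ | ∃ σ : V ≃ Fin (Fintype.card V), mw G σ = m}

/-- The closed neighborhood `N[s]` of a set of vertices: `s` together with all vertices
adjacent to some vertex of `s`. -/
def closedNbhd (G : SimpleGraph V) (s : Set V) : Set V :=
  s ∪ {v | ∃ u ∈ s, G.Adj u v}

set_option linter.unusedSectionVars false
set_option linter.unusedVariables false
set_option maxHeartbeats 1000000
/- ### general lemmas -/

set_option linter.unusedSectionVars false in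
lemma isInducedMatching_empty (H : SimpleGraph V) : IsInducedMatching H ∅ := by
  constructor
  · simp
  · intro e he; simp at he

lemma card_le_mim {H : SimpleGraph V} {M : Finset (Sym2 V)}
    (h : IsInducedMatching H M) : M.card ≤ mim H := by
  apply le_csSup
  · refine ⟨Fintype.card (Sym2 V), ?_⟩
    rintro n ⟨M, -, rfl⟩
    exact M.card_le_univ
  · exact ⟨M, h, rfl⟩

lemma mim_le {H : SimpleGraph V} {m : ℕ}
    (h : ∀ M : Finset (Sym2 V), IsInducedMatching H M → M.card ≤ m) : mim H ≤ m := by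
  apply csSup_le
  · exact ⟨0, ∅, isInducedMatching_empty H, by simp⟩
  · rintro n ⟨M, hM, rfl⟩
    exact h M hM

lemma exists_mw_eq_lmw (G : SimpleGraph V) : ∃ σ : V ≃ Fin (Fintype.card V), mw G σ = lmw G := by
  have hne : {m : ℕ | ∃ σ : V ≃ Fin (Fintype.card V), mw G σ = m}.Nonempty :=
    ⟨mw G (Fintype.equivFin V), ⟨Fintype.equivFin V, rfl⟩⟩
  exact Nat.sInf_mem hne

lemma lmw_le_mw (G : SimpleGraph V) (σ : V ≃ Fin (Fintype.card V)) : lmw G ≤ mw G σ :=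
  Nat.sInf_le ⟨σ, rfl⟩

lemma mim_cutGraph_le_mw (G : SimpleGraph V) (σ : V ≃ Fin (Fintype.card V)) {i : ℕ}
    (hi : i ∈ Finset.Ico 1 (Fintype.card V)) : mim (cutGraph G σ i) ≤ mw G σ :=
  Finset.le_sup (f := fun i => mim (cutGraph G σ i)) hi

/-- The graph of edges of `G` crossing between `A` and its complement. -/
def crossGraph (G : SimpleGraph V) (A : Set V) : SimpleGraph V where
  Adj u v := G.Adj u v ∧ ((u ∈ A ∧ v ∉ A) ∨ (v ∈ A ∧ u ∉ A))
  symm := by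
    constructor
    intro u v h
    exact ⟨h.1.symm, h.2.symm⟩
  loopless := by
    constructor
    intro u h
    exact G.ne_of_adj h.1 rfl

lemma cutGraph_eq_crossGraph (G : SimpleGraph V) (σ : V ≃ Fin (Fintype.card V)) (i : ℕ) :
    cutGraph G σ i = crossGraph G {v | (σ v : ℕ) < i} := by
  ext u v
  simp only [cutGraph, crossGraph, Set.mem_setOf_eq]
  constructor
  · rintro ⟨h, h2⟩
    exact ⟨h, by omega⟩
  · rintro ⟨h, h2⟩
    exact ⟨h, by omega⟩

/-- Reduce `lmw G ≤ m` to a bound on induced matchings of cross graphs of downward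
closed sets w.r.t. an injective key function. -/
lemma lmw_le_of_key {κ : Type*} [LinearOrder κ] (G : SimpleGraph V) (key : V → κ)
    (hinj : Function.Injective key) (m : ℕ)
    (h : ∀ A : Set V, (∀ u v : V, key u < key v → v ∈ A → u ∈ A) →
      ∀ M : Finset (Sym2 V), IsInducedMatching (crossGraph G A) M → M.card ≤ m) :
    lmw G ≤ m := by
  letI : LinearOrder V := LinearOrder.lift' key hinj
  have hcard : (Finset.univ : Finset V).card = Fintype.card V := Finset.card_univ
  let e : Fin (Fintype.card V) ≃o (Finset.univ : Finset V) :=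
    Finset.orderIsoOfFin _ hcard
  let σ : V ≃ Fin (Fintype.card V) :=
    { toFun := fun v => e.symm ⟨v, Finset.mem_univ v⟩
      invFun := fun i => (e i : V)
      left_inv := fun v => by simp
      right_inv := fun i => by simp }
  have hmono : ∀ u v : V, key u < key v → (σ u : ℕ) < (σ v : ℕ) := by
    intro u v huv
    have : (⟨u, Finset.mem_univ u⟩ : (Finset.univ : Finset V)) < ⟨v, Finset.mem_univ v⟩ := by
      exact Subtype.mk_lt_mk.2 huv
    exact e.symm.strictMono this
  refine le_trans (lmw_le_mw G σ) ?_
  apply Finset.sup_le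
  intro i hi
  rw [cutGraph_eq_crossGraph]
  apply mim_le
  intro M hM
  refine h _ ?_ M hM
  intro u v huv hv
  simp only [Set.mem_setOf_eq] at hv ⊢
  exact lt_of_lt_of_le (hmono u v huv) (le_of_lt hv)


section Generic
omit [Fintype V]



/-- Transfer an induced matching through an injection that reflects adjacency. -/
lemma transfer_matching {V' W : Type*} (H : SimpleGraph V') (H' : SimpleGraph W)
    (φ : W → V') (hφ : Function.Injective φ) (M : Finset (Sym2 V'))
    (hM : IsInducedMatching H M)
    (hadj : ∀ w w' : W, H'.Adj w w' ↔ H.Adj (φ w) (φ w'))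
    (hsupp : ∀ e ∈ M, ∃ w w' : W, e = s(φ w, φ w')) :
    ∃ M' : Finset (Sym2 W), IsInducedMatching H' M' ∧ M'.card = M.card := by
  rcases M.eq_empty_or_nonempty with rfl | ⟨e₀, he₀⟩
  · refine ⟨∅, ⟨by simp, by simp⟩, by simp⟩
  · obtain ⟨w₀, -, -⟩ := hsupp e₀ he₀
    haveI : Nonempty W := ⟨w₀⟩
    set ψ : V' → W := Function.invFun φ with hψ
    have hlinv : ∀ w : W, ψ (φ w) = w := fun w => Function.leftInverse_invFun hφ w
    have hback : ∀ e ∈ M, Sym2.map φ (Sym2.map ψ e) = e := by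
      intro e he
      obtain ⟨w, w', rfl⟩ := hsupp e he
      simp [Sym2.map_pair_eq, hlinv]
    refine ⟨M.image (Sym2.map ψ), ⟨?_, ?_⟩, ?_⟩
    · intro e' he'
      simp only [Finset.coe_image, Set.mem_image, Finset.mem_coe] at he'
      obtain ⟨e, he, rfl⟩ := he'
      obtain ⟨w, w', rfl⟩ := hsupp e he
      have : H.Adj (φ w) (φ w') := (SimpleGraph.mem_edgeSet H).1 (hM.1 he)
      have h2 : H'.Adj w w' := (hadj w w').2 this
      simpa [Sym2.map_pair_eq, hlinv] using (SimpleGraph.mem_edgeSet H').2 h2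
    · intro e' he' f' hf' hne u hu v hv
      simp only [Finset.mem_image] at he' hf'
      obtain ⟨e, he, rfl⟩ := he'
      obtain ⟨f, hf, rfl⟩ := hf'
      have hef : e ≠ f := by
        rintro rfl; exact hne rfl
      obtain ⟨w1, w2, hew⟩ := hsupp e he
      obtain ⟨w3, w4, hfw⟩ := hsupp f hf
      subst hew; subst hfw
      simp only [Sym2.map_pair_eq, hlinv, Sym2.mem_iff] at hu hv
      have hue : φ u ∈ s(φ w1, φ w2) := by
        rcases hu with rfl | rfl <;> simp
      have hvf : φ v ∈ s(φ w3, φ w4) := by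
        rcases hv with rfl | rfl <;> simp
      obtain ⟨hne2, hnadj⟩ := hM.2 _ he _ hf hef (φ u) hue (φ v) hvf
      exact ⟨fun h => hne2 (by rw [h]), fun h => hnadj ((hadj u v).1 h)⟩
    · apply Finset.card_image_of_injOn
      intro e he f hf hether
      have := hback e he
      rw [hether] at this
      rw [← this, hback f hf]

/-- A downward closed set w.r.t. an enumeration is an initial segment. -/
lemma initseg {W : Type*} [Fintype W] (σ : W ≃ Fin (Fintype.card W)) (B : Finset W)
    (hB : ∀ u v : W, (σ u : ℕ) ≤ (σ v : ℕ) → v ∈ B → u ∈ B) :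
    ∀ v : W, v ∈ B ↔ (σ v : ℕ) < B.card := by
  set s : Finset ℕ := B.image (fun w => (σ w : ℕ)) with hs
  have hcard : s.card = B.card := by
    apply Finset.card_image_of_injOn
    intro u hu v hv huv
    exact σ.injective (Fin.val_injective huv)
  have hdown : ∀ b ∈ s, ∀ a : ℕ, a ≤ b → a ∈ s := by
    intro b hb a hab
    simp only [hs, Finset.mem_image] at hb ⊢
    obtain ⟨w, hw, rfl⟩ := hb
    have ha : a < Fintype.card W := lt_of_le_of_lt hab (σ w).isLt
    refine ⟨σ.symm ⟨a, ha⟩, hB _ _ (by simp [hab]) hw, by simp⟩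
  have hsub : s ⊆ Finset.range s.card := by
    intro b hb
    simp only [Finset.mem_range]
    by_contra hcon
    push_neg at hcon
    have : Finset.range (b + 1) ⊆ s := by
      intro a ha
      simp only [Finset.mem_range] at ha
      exact hdown b hb a (by omega)
    have := Finset.card_le_card this
    simp only [Finset.card_range] at this
    omega
  have hseq : s = Finset.range s.card := by
    apply Finset.eq_of_subset_of_card_le hsub
    simp
  intro v
  constructor
  · intro hv
    have : (σ v : ℕ) ∈ s := Finset.mem_image_of_mem _ hv
    rw [hseq, Finset.mem_range, hcard] at this
    exact this
  · intro hv
    have : (σ v : ℕ) ∈ s := by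
      rw [hseq, Finset.mem_range, hcard]
      exact hv
    simp only [hs, Finset.mem_image] at this
    obtain ⟨w, hw, hww⟩ := this
    have : w = v := σ.injective (Fin.val_injective hww)
    rwa [this] at hw


end Generic

section Trees
open SimpleGraph Walk
variable {T : SimpleGraph V}




lemma path_eq (ha : T.IsAcyclic) {u v : V} {p q : T.Walk u v} (hp : p.IsPath) (hq : q.IsPath) :
    p = q := by
  have := ha.path_unique ⟨p, hp⟩ ⟨q, hq⟩
  exact Subtype.ext_iff.1 this

/-- A path between two vertices of `P.support` staying inside `P.support`. -/
lemma exists_path_in_support {a b : V} (P : T.Walk a b) {u w : V}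
    (hu : u ∈ P.support) (hw : w ∈ P.support) :
    ∃ q : T.Walk u w, q.IsPath ∧ (∀ x ∈ q.support, x ∈ P.support) ∧
      (∀ e ∈ q.edges, e ∈ P.edges) := by
  set q0 : T.Walk u w := (P.takeUntil u hu).reverse.append (P.takeUntil w hw) with hq0
  refine ⟨q0.bypass, SimpleGraph.Walk.bypass_isPath q0, ?_, ?_⟩
  · intro x hx
    have hx0 : x ∈ q0.support := SimpleGraph.Walk.support_bypass_subset q0 hx
    rw [hq0] at hx0
    rcases (SimpleGraph.Walk.mem_support_append_iff _ _).1 hx0 with h | h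
    · rw [SimpleGraph.Walk.support_reverse] at h
      exact SimpleGraph.Walk.support_takeUntil_subset P hu (List.mem_reverse.1 h)
    · exact SimpleGraph.Walk.support_takeUntil_subset P hw h
  · intro e he
    have he0 : e ∈ q0.edges := SimpleGraph.Walk.edges_bypass_subset q0 he
    rw [hq0, SimpleGraph.Walk.edges_append, List.mem_append] at he0
    rcases he0 with h | h
    · rw [SimpleGraph.Walk.edges_reverse, List.mem_reverse] at h
      exact SimpleGraph.Walk.edges_takeUntil_subset P hu h
    · exact SimpleGraph.Walk.edges_takeUntil_subset P hw h

/-- In an acyclic graph, an edge of `T` between vertices of a path `P` is an edge of `P`. -/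
lemma adj_support_mem_edges (ha : T.IsAcyclic) {a b : V} (P : T.Walk a b)
    {u v : V} (huv : T.Adj u v) (hu : u ∈ P.support) (hv : v ∈ P.support) :
    s(u, v) ∈ P.edges := by
  obtain ⟨q, hq, hqs, hqe⟩ := exists_path_in_support P hu hv
  have hsing : (SimpleGraph.Walk.cons huv SimpleGraph.Walk.nil).IsPath := by
    rw [SimpleGraph.Walk.isPath_def]
    simp [huv.ne]
  have := path_eq ha hq hsing
  apply hqe
  rw [this]
  simp

/-- Uniqueness of the neighbour on the path: a vertex not on `P` has at most one
neighbour on `P`. -/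
lemma pathNbr_unique (ha : T.IsAcyclic) {a b : V} (P : T.Walk a b)
    {x x' y : V} (hx : x ∈ P.support) (hx' : x' ∈ P.support) (hy : y ∉ P.support)
    (h1 : T.Adj x y) (h2 : T.Adj x' y) : x = x' := by
  by_contra hne
  obtain ⟨q, hq, hqs, -⟩ := exists_path_in_support P hx hx'
  have hp2 : (SimpleGraph.Walk.cons h1 (SimpleGraph.Walk.cons h2.symm
      SimpleGraph.Walk.nil)).IsPath := by
    rw [SimpleGraph.Walk.isPath_def]
    have : y ≠ x' := fun h => hy (h ▸ hx')
    simp [h1.ne, hne, this]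
  have heq := path_eq ha hq hp2
  have : y ∈ q.support := by rw [heq]; simp
  exact hy (hqs y this)

/-- A path from `y` to `y'` through the support of `P`, containing `x`. -/
lemma exists_yPath (ha : T.IsAcyclic) {a b : V} (P : T.Walk a b)
    {x x' y y' : V} (hx : x ∈ P.support) (hx' : x' ∈ P.support)
    (hy : y ∉ P.support) (hy' : y' ∉ P.support) (hyy' : y ≠ y')
    (h1 : T.Adj y x) (h2 : T.Adj x' y') :
    ∃ r : T.Walk y y', r.IsPath ∧ (∀ z ∈ r.support, z ∈ P.support ∨ z = y ∨ z = y') ∧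
      x ∈ r.support := by
  obtain ⟨q, hq, hqs, -⟩ := exists_path_in_support P hx hx'
  set r : T.Walk y y' := SimpleGraph.Walk.cons h1
    (q.append (SimpleGraph.Walk.cons h2 SimpleGraph.Walk.nil)) with hr
  have hrsupp : r.support = y :: (q.support ++ [y']) := by
    rw [hr]
    rw [SimpleGraph.Walk.support_cons, SimpleGraph.Walk.support_append]
    simp
  have hrp : r.IsPath := by
    rw [SimpleGraph.Walk.isPath_def, hrsupp]
    refine List.nodup_cons.2 ⟨?_, ?_⟩
    · intro hmem
      rcases List.mem_append.1 hmem with h | h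
      · exact hy (hqs y h)
      · simp at h; exact hyy' h
    · refine List.Nodup.append (hq.support_nodup) (by simp) ?_
      intro z hz
      simp only [List.mem_singleton]
      intro h
      exact hy' (h ▸ hqs z hz)
  refine ⟨r, hrp, ?_, ?_⟩
  · intro z hz
    rw [hrsupp] at hz
    rcases List.mem_cons.1 hz with rfl | hz
    · right; left; rfl
    · rcases List.mem_append.1 hz with h | h
      · exact Or.inl (hqs z h)
      · simp at h; right; right; exact h
  · rw [hrsupp]
    right
    exact List.mem_append.2 (Or.inl (SimpleGraph.Walk.start_mem_support q))

/-- No edge of `T` between two vertices each adjacent to the path but not on it. -/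
lemma no_Y_edge (ha : T.IsAcyclic) {a b : V} (P : T.Walk a b)
    {x x' y y' : V} (hx : x ∈ P.support) (hx' : x' ∈ P.support)
    (hy : y ∉ P.support) (hy' : y' ∉ P.support)
    (h1 : T.Adj x y) (h2 : T.Adj x' y') (h3 : T.Adj y y') : False := by
  obtain ⟨r, hr, -, hxr⟩ := exists_yPath ha P hx hx' hy hy' h3.ne h1.symm h2
  have hsing : (SimpleGraph.Walk.cons h3 SimpleGraph.Walk.nil).IsPath := by
    rw [SimpleGraph.Walk.isPath_def]; simp [h3.ne]
  have heq := path_eq ha hr hsing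
  rw [heq] at hxr
  have : x = y ∨ x = y' := by simpa using hxr
  rcases this with rfl | rfl
  · exact hy hx
  · exact hy' hx





lemma exit_lemma {S : Set V} {u c : V} (w : T.Walk u c) :
    u ∈ Sᶜ → c ∈ S → ∃ u' y : V, ∃ h1 : u' ∈ Sᶜ, y ∈ S ∧ T.Adj u' y ∧
      ∀ hu : u ∈ Sᶜ, (T.induce Sᶜ).connectedComponentMk ⟨u', h1⟩ =
        (T.induce Sᶜ).connectedComponentMk ⟨u, hu⟩ := by
  induction w with
  | nil => intro hu hc; exact absurd hc hu
  | @cons u v c h p ih =>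
    intro hu hc
    by_cases hv : v ∈ S
    · exact ⟨u, v, hu, hv, h, fun _ => rfl⟩
    · obtain ⟨u', y, h1, h2, h3, hcomp⟩ := ih hv hc
      refine ⟨u', y, h1, h2, h3, fun hu' => ?_⟩
      rw [hcomp hv]
      exact SimpleGraph.ConnectedComponent.sound
        (SimpleGraph.Adj.reachable (by exact h.symm))

lemma comp_walk {S : Set V} {u u' : V} (hu : u ∈ Sᶜ) (hu' : u' ∈ Sᶜ)
    (h : (T.induce Sᶜ).connectedComponentMk ⟨u, hu⟩ =
      (T.induce Sᶜ).connectedComponentMk ⟨u', hu'⟩) :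
    ∃ w : T.Walk u u', w.IsPath ∧ ∀ z ∈ w.support, z ∈ Sᶜ := by
  have hr : (T.induce Sᶜ).Reachable ⟨u, hu⟩ ⟨u', hu'⟩ :=
    (SimpleGraph.ConnectedComponent.eq).1 h
  obtain ⟨w0⟩ := hr
  have w1 : T.Walk u u' := w0.map (SimpleGraph.Embedding.induce Sᶜ).toHom
  refine ⟨(w0.map (SimpleGraph.Embedding.induce Sᶜ).toHom).bypass,
    SimpleGraph.Walk.bypass_isPath _, ?_⟩
  intro z hz
  have hz2 := SimpleGraph.Walk.support_bypass_subset _ hz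
  erw [SimpleGraph.Walk.support_map] at hz2
  obtain ⟨z', _, rfl⟩ := List.mem_map.1 hz2
  exact z'.2


lemma attach_unique (ha : T.IsAcyclic) {a b : V} (P : T.Walk a b) {S : Set V}
    (hPS : ∀ v ∈ P.support, v ∈ S)
    {u u' y y' x x' : V} (hu : u ∈ Sᶜ) (hu' : u' ∈ Sᶜ)
    (hyP : y ∉ P.support) (hy'P : y' ∉ P.support) (hyS : y ∈ S) (hy'S : y' ∈ S)
    (hx : x ∈ P.support) (hx' : x' ∈ P.support) (hxy : T.Adj x y) (hx'y' : T.Adj x' y')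
    (hadj : T.Adj u y) (hadj' : T.Adj u' y')
    (hcomp : (T.induce Sᶜ).connectedComponentMk ⟨u, hu⟩ =
      (T.induce Sᶜ).connectedComponentMk ⟨u', hu'⟩) : u = u' ∧ y = y' := by
  obtain ⟨w, hw, hws⟩ := comp_walk hu hu' hcomp
  have huS : u ∉ S := hu
  have hu'S : u' ∉ S := hu'
  have hyy : y = y' := by
    by_contra hne
    obtain ⟨r, hr, hrs, -⟩ := exists_yPath ha P hx hx' hyP hy'P hne hxy.symm hx'y'
    set r2 : T.Walk y y' := Walk.cons hadj.symm (w.append (Walk.cons hadj' Walk.nil))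
      with hr2def
    have hr2supp : r2.support = y :: (w.support ++ [y']) := by
      rw [hr2def, Walk.support_cons, Walk.support_append]
      simp
    have hr2 : r2.IsPath := by
      rw [Walk.isPath_def, hr2supp]
      refine List.nodup_cons.2 ⟨?_, ?_⟩
      · intro hmem
        rcases List.mem_append.1 hmem with h | h
        · exact (hws y h) hyS
        · simp at h; exact hne h
      · refine List.Nodup.append hw.support_nodup (by simp) ?_
        intro z hz
        simp only [List.mem_singleton]
        intro h
        exact (hws z hz) (h ▸ hy'S)
    have heq := path_eq ha hr hr2
    have : u ∈ r.support := by
      rw [heq, hr2supp]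
      right
      exact List.mem_append.2 (Or.inl w.start_mem_support)
    rcases hrs u this with h | h | h
    · exact huS (hPS u h)
    · exact huS (h ▸ hyS)
    · exact huS (h ▸ hy'S)
  subst hyy
  refine ⟨?_, rfl⟩
  by_contra hne
  have hp2 : (Walk.cons hadj (Walk.cons hadj'.symm Walk.nil)).IsPath := by
    rw [Walk.isPath_def]
    have h1 : u ≠ y := hadj.ne
    have h2 : y ≠ u' := fun h => hu'S (h ▸ hyS)
    simp [h1, h2, hne]
  have heq := path_eq ha hw hp2
  have : y ∈ w.support := by rw [heq]; simp
  exact (hws y this) hyS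

lemma indexOf_edge {a b : V} (P : T.Walk a b) : P.IsPath → ∀ {u v : V},
    s(u, v) ∈ P.edges →
    P.support.idxOf v = P.support.idxOf u + 1 ∨
      P.support.idxOf u = P.support.idxOf v + 1 := by
  induction P with
  | nil => intro _ u v h; simp at h
  | @cons a c b hadj p ih =>
    intro hP u v h
    rw [Walk.cons_isPath_iff] at hP
    obtain ⟨hp, hanotin⟩ := hP
    rw [Walk.edges_cons, List.mem_cons] at h
    have hca : c ≠ a := fun h => hanotin (h ▸ p.start_mem_support)
    have hidxc : (Walk.cons hadj p).support.idxOf c = 1 := by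
      rw [Walk.support_cons, List.idxOf_cons_ne _ hca.symm]
      have : p.support.idxOf c = 0 := by
        rw [p.support_eq_cons]
        exact List.idxOf_cons_self
      omega
    have hidxa : (Walk.cons hadj p).support.idxOf a = 0 := by
      rw [Walk.support_cons]
      exact List.idxOf_cons_self
    rcases h with h | h
    · rw [Sym2.eq_iff] at h
      rcases h with ⟨rfl, rfl⟩ | ⟨rfl, rfl⟩
      · left; omega
      · right; omega
    · have hup : u ∈ p.support := p.fst_mem_support_of_mem_edges h
      have hvp : v ∈ p.support := p.snd_mem_support_of_mem_edges h
      have hua : a ≠ u := fun hh => hanotin (hh ▸ hup)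
      have hva : a ≠ v := fun hh => hanotin (hh ▸ hvp)
      have e1 : (Walk.cons hadj p).support.idxOf u = p.support.idxOf u + 1 := by
        rw [Walk.support_cons, List.idxOf_cons_ne _ hua]
      have e2 : (Walk.cons hadj p).support.idxOf v = p.support.idxOf v + 1 := by
        rw [Walk.support_cons, List.idxOf_cons_ne _ hva]
      rcases ih hp h with hh | hh
      · left; omega
      · right; omega

end Trees

def mk4 (a b c d : ℕ) : ℕ ×ₗ (ℕ ×ₗ (ℕ ×ₗ ℕ)) := toLex (a, toLex (b, toLex (c, d)))

lemma mk4_lt {a b c d a' b' c' d' : ℕ} : mk4 a b c d < mk4 a' b' c' d' ↔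
    (a < a' ∨ (a = a' ∧ (b < b' ∨ (b = b' ∧ (c < c' ∨ (c = c' ∧ d < d')))))) := by
  simp [mk4, Prod.Lex.lt_iff]

lemma mk4_inj {a b c d a' b' c' d' : ℕ} : mk4 a b c d = mk4 a' b' c' d' ↔
    (a = a' ∧ b = b' ∧ c = c' ∧ d = d') := by
  simp [mk4, Prod.ext_iff]

/-- **Path layout lemma.** If `T` is a tree and there is a path `P` in `T` such that every
connected component of `T ∖ N[P]` has linear MIM-width at most `k`, then `lmw T ≤ k + 1`. -/
theorem path_layout_lemma {V : Type*} [Fintype V] (T : SimpleGraph V) (hT : T.IsTree)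
    (k : ℕ) (a b : V) (P : T.Walk a b) (hP : P.IsPath)
    (hcomp : ∀ c : (T.induce (closedNbhd T {v | v ∈ P.support})ᶜ).ConnectedComponent,
      lmw ((T.induce (closedNbhd T {v | v ∈ P.support})ᶜ).induce c.supp) ≤ k) :
    lmw T ≤ k + 1 := by
  classical
  set S : Set V := closedNbhd T {v | v ∈ P.support} with hSdef
  have hSmem : ∀ v : V, v ∈ S ↔ (v ∈ P.support ∨ ∃ x ∈ P.support, T.Adj x v) := by
    intro v
    simp [hSdef, closedNbhd, Set.mem_union, Set.mem_setOf_eq]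
  have hPsubS : ∀ v ∈ P.support, v ∈ S := fun v h => (hSmem v).2 (Or.inl h)
  have hnbrP : ∀ u y : V, u ∉ S → T.Adj u y → y ∉ P.support := by
    intro u y hu hadj hy
    exact hu ((hSmem u).2 (Or.inr ⟨y, hy, hadj.symm⟩))
  set n := Fintype.card V with hn
  set ι := Fintype.equivFin V with hι
  set idx : V → ℕ := fun v => P.support.idxOf v with hidxdef
  have hidxinj : ∀ x y : V, x ∈ P.support → y ∈ P.support → idx x = idx y → x = y := by
    intro x y hx hy h
    exact (List.idxOf_inj hx).1 h
  -- path neighbour of vertices in S \ P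
  have hpn : ∀ y : V, ∃ x : V, y ∈ S → y ∉ P.support → (x ∈ P.support ∧ T.Adj x y) := by
    intro y
    by_cases hy : y ∈ S ∧ y ∉ P.support
    · rcases (hSmem y).1 hy.1 with h | ⟨x, hx, hadj⟩
      · exact absurd h hy.2
      · exact ⟨x, fun _ _ => ⟨hx, hadj⟩⟩
    · exact ⟨a, fun h1 h2 => absurd ⟨h1, h2⟩ hy⟩
  choose pnbr hpnbr using hpn
  -- attachment of components
  have hatt0 : ∀ c : (T.induce Sᶜ).ConnectedComponent, ∃ p : V × V, ∃ h1 : p.1 ∈ Sᶜ,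
      p.2 ∈ S ∧ T.Adj p.1 p.2 ∧ (T.induce Sᶜ).connectedComponentMk ⟨p.1, h1⟩ = c := by
    intro c
    obtain ⟨⟨u, hu⟩, hc⟩ := c.exists_rep
    have haS : a ∈ S := hPsubS a P.start_mem_support
    obtain ⟨w⟩ := hT.isConnected.preconnected u a
    obtain ⟨u', y, h1, h2, h3, hcm⟩ := exit_lemma w hu haS
    exact ⟨(u', y), h1, h2, h3, by rw [hcm hu]; exact hc⟩
  choose att hattmem hattS hattadj hattcomp using hatt0
  -- optimal layouts of the components
  have hsigC : ∀ c : (T.induce Sᶜ).ConnectedComponent,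
      ∃ σ, mw ((T.induce Sᶜ).induce c.supp) σ = lmw ((T.induce Sᶜ).induce c.supp) :=
    fun c => exists_mw_eq_lmw _
  choose σC hσC using hsigC
  set cOf : ∀ v : V, ¬ v ∈ S → (T.induce Sᶜ).ConnectedComponent :=
    fun v hv => (T.induce Sᶜ).connectedComponentMk ⟨v, hv⟩ with hcOfdef
  have hmemsupp : ∀ (v : V) (hv : ¬ v ∈ S), (⟨v, hv⟩ : ↥Sᶜ) ∈ (cOf v hv).supp :=
    fun v hv => (SimpleGraph.ConnectedComponent.mem_supp_iff _ _).2 rfl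
  set iC : (T.induce Sᶜ).ConnectedComponent → ℕ := fun c => idx (pnbr (att c).2) with hiC
  set gC : (T.induce Sᶜ).ConnectedComponent → ℕ := fun c => 1 + ι (att c).2 with hgC
  set dC : (T.induce Sᶜ).ConnectedComponent → ℕ := fun c => 1 + ι (att c).1 with hdC
  set key : V → ℕ ×ₗ (ℕ ×ₗ (ℕ ×ₗ ℕ)) := fun v =>
    if _hp : v ∈ P.support then mk4 (idx v) 0 0 0
    else if hs : v ∈ S then mk4 (idx (pnbr v)) (1 + ι v) (n + 1) 0
    else mk4 (iC (cOf v hs)) (gC (cOf v hs)) (dC (cOf v hs))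
      (σC (cOf v hs) ⟨⟨v, hs⟩, hmemsupp v hs⟩) with hkeydef
  have keyP : ∀ v : V, v ∈ P.support → key v = mk4 (idx v) 0 0 0 := by
    intro v h
    simp only [hkeydef]
    rw [dif_pos h]
  have keyY : ∀ v : V, v ∉ P.support → v ∈ S →
      key v = mk4 (idx (pnbr v)) (1 + ι v) (n + 1) 0 := by
    intro v h1 h2
    simp only [hkeydef]
    rw [dif_neg h1, dif_pos h2]
  have keyC : ∀ (v : V) (hv : ¬ v ∈ S), key v = mk4 (iC (cOf v hv)) (gC (cOf v hv))
      (dC (cOf v hv)) (σC (cOf v hv) ⟨⟨v, hv⟩, hmemsupp v hv⟩) := by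
    intro v hv
    simp only [hkeydef]
    rw [dif_neg (fun hp => hv (hPsubS v hp)), dif_neg hv]
  -- components coincide iff their attachment points coincide
  have hattdet : ∀ c c' : (T.induce Sᶜ).ConnectedComponent, (att c).1 = (att c').1 → c = c' := by
    intro c c' h
    rw [← hattcomp c, ← hattcomp c']
    congr 1
    exact Subtype.ext h
  have hiota : ∀ x y : V, (ι x : ℕ) = (ι y : ℕ) → x = y := by
    intro x y h
    exact ι.injective (Fin.val_injective h)
  have hiotalt : ∀ x : V, (ι x : ℕ) < n := fun x => (ι x).isLt
  -- injectivity of the key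
  have hCCinj : ∀ (c c' : (T.induce Sᶜ).ConnectedComponent) (x : ↥c.supp) (y : ↥c'.supp),
      c = c' → (σC c x : ℕ) = (σC c' y : ℕ) → ((x : ↥Sᶜ) : V) = ((y : ↥Sᶜ) : V) := by
    intro c c' x y h
    subst h
    intro h2
    have h3 : x = y := (σC c).injective (Fin.val_injective h2)
    rw [h3]
  have keyinj : Function.Injective key := by
    intro v w hvw
    by_cases hvp : v ∈ P.support <;> by_cases hwp : w ∈ P.support
    · rw [keyP v hvp, keyP w hwp, mk4_inj] at hvw
      exact hidxinj v w hvp hwp hvw.1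
    · by_cases hwS : w ∈ S
      · rw [keyP v hvp, keyY w hwp hwS, mk4_inj] at hvw
        omega
      · rw [keyP v hvp, keyC w hwS, mk4_inj] at hvw
        simp only [hgC] at hvw
        omega
    · by_cases hvS : v ∈ S
      · rw [keyY v hvp hvS, keyP w hwp, mk4_inj] at hvw
        omega
      · rw [keyC v hvS, keyP w hwp, mk4_inj] at hvw
        simp only [hgC] at hvw
        omega
    · by_cases hvS : v ∈ S <;> by_cases hwS : w ∈ S
      · rw [keyY v hvp hvS, keyY w hwp hwS, mk4_inj] at hvw
        exact hiota v w (by omega)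
      · rw [keyY v hvp hvS, keyC w hwS, mk4_inj] at hvw
        have := hiotalt (att (cOf w hwS)).1
        simp only [hdC] at hvw
        omega
      · rw [keyC v hvS, keyY w hwp hwS, mk4_inj] at hvw
        have := hiotalt (att (cOf v hvS)).1
        simp only [hdC] at hvw
        omega
      · rw [keyC v hvS, keyC w hwS, mk4_inj] at hvw
        obtain ⟨h1, h2, h3, h4⟩ := hvw
        have hceq : cOf v hvS = cOf w hwS := by
          apply hattdet
          apply hiota
          simp only [hdC] at h3
          omega
        exact hCCinj (cOf v hvS) (cOf w hwS) ⟨⟨v, hvS⟩, hmemsupp v hvS⟩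
          ⟨⟨w, hwS⟩, hmemsupp w hwS⟩ hceq h4
  -- the unique attachment of a component
  have hattuniq : ∀ (u y : V) (hu : ¬ u ∈ S), y ∈ S → T.Adj u y →
      u = (att (cOf u hu)).1 ∧ y = (att (cOf u hu)).2 := by
    intro u y hu hyS hadj
    have hyP : y ∉ P.support := hnbrP u y hu hadj
    have hy'P : (att (cOf u hu)).2 ∉ P.support :=
      hnbrP (att (cOf u hu)).1 (att (cOf u hu)).2 (hattmem (cOf u hu)) (hattadj (cOf u hu))
    have h1 := hpnbr y hyS hyP
    have h2 := hpnbr (att (cOf u hu)).2 (hattS (cOf u hu)) hy'P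
    exact attach_unique hT.IsAcyclic P hPsubS (show u ∈ Sᶜ from hu) (hattmem (cOf u hu))
      hyP hy'P hyS (hattS (cOf u hu)) h1.1 h2.1 h1.2 h2.2 hadj (hattadj (cOf u hu))
      (hattcomp (cOf u hu)).symm
  -- main bound
  apply lmw_le_of_key T key keyinj
  intro A hdc M hM
  have hAcontra : ∀ x y : V, key x < key y → x ∉ A → y ∈ A → False :=
    fun x y h1 h2 h3 => h2 (hdc x y h1 h3)
  have hedge : ∀ e ∈ M, ∃ u v : V, e = s(u, v) ∧ T.Adj u v ∧ u ∈ A ∧ v ∉ A := by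
    intro e
    induction e using Sym2.ind with
    | _ u v =>
      intro he
      have hes := hM.1 he
      rw [SimpleGraph.mem_edgeSet] at hes
      obtain ⟨hadj, h2⟩ := hes
      rcases h2 with ⟨h3, h4⟩ | ⟨h3, h4⟩
      · exact ⟨u, v, rfl, hadj, h3, h4⟩
      · exact ⟨v, u, Sym2.eq_swap, hadj.symm, h3, h4⟩
  have hkeylt : ∀ u v : V, T.Adj u v → u ∈ A → v ∉ A → key u < key v := by
    intro u v hadj hu hv
    rcases lt_trichotomy (key u) (key v) with h | h | h
    · exact h
    · exact absurd (keyinj h) hadj.ne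
    · exact absurd (hdc v u h hu) hv
  -- classification of crossing edges touching S
  have classify : ∀ u v : V, T.Adj u v → u ∈ A → v ∉ A → (u ∈ S ∨ v ∈ S) →
      (u ∈ P.support ∧ v ∈ P.support ∧ idx v = idx u + 1) ∨
      (u ∈ P.support ∧ v ∉ P.support ∧ v ∈ S ∧ pnbr v = u) ∨
      (∃ hu : ¬ u ∈ S, v ∉ P.support ∧ v ∈ S ∧
        (att (cOf u hu)).1 = u ∧ (att (cOf u hu)).2 = v) := by
    intro u v hadj huA hvA htouch
    have hlt := hkeylt u v hadj huA hvA
    by_cases hup : u ∈ P.support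
    · by_cases hvp : v ∈ P.support
      · have hedg := adj_support_mem_edges hT.IsAcyclic P hadj hup hvp
        have hpm : idx v = idx u + 1 ∨ idx u = idx v + 1 := indexOf_edge P hP hedg
        rw [keyP u hup, keyP v hvp, mk4_lt] at hlt
        left
        refine ⟨hup, hvp, ?_⟩
        omega
      · by_cases hvS : v ∈ S
        · right; left
          have h1 := hpnbr v hvS hvp
          exact ⟨hup, hvp, hvS, pathNbr_unique hT.IsAcyclic P h1.1 hup hvp h1.2 hadj⟩
        · exact absurd ((hSmem v).2 (Or.inr ⟨u, hup, hadj⟩)) hvS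
    · by_cases huS : u ∈ S
      · by_cases hvp : v ∈ P.support
        · have h1 := hpnbr u huS hup
          have hpv : pnbr u = v := pathNbr_unique hT.IsAcyclic P h1.1 hvp hup h1.2 hadj.symm
          rw [keyY u hup huS, keyP v hvp, hpv, mk4_lt] at hlt
          omega
        · by_cases hvS : v ∈ S
          · have h1 := hpnbr u huS hup
            have h2 := hpnbr v hvS hvp
            exact absurd hadj
              (fun h => no_Y_edge hT.IsAcyclic P h1.1 h2.1 hup hvp h1.2 h2.2 h)
          · obtain ⟨hv1, hv2⟩ := hattuniq v u hvS huS hadj.symm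
            rw [keyY u hup huS, keyC v hvS, mk4_lt] at hlt
            simp only [hiC, hgC, hdC, ← hv2] at hlt
            have := hiotalt (att (cOf v hvS)).1
            omega
      · by_cases hvp : v ∈ P.support
        · exact absurd ((hSmem u).2 (Or.inr ⟨v, hvp, hadj.symm⟩)) huS
        · by_cases hvS : v ∈ S
          · obtain ⟨h1, h2⟩ := hattuniq u v huS hvS hadj
            exact Or.inr (Or.inr ⟨huS, hvp, hvS, h1.symm, h2.symm⟩)
          · rcases htouch with h | h
            · exact absurd h huS
            · exact absurd h hvS
  -- split the matching
  set MS := M.filter (fun e => ∃ x ∈ e, x ∈ S) with hMSdef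
  set MC := M.filter (fun e => ¬ ∃ x ∈ e, x ∈ S) with hMCdef
  have hsplit : MS.card + MC.card = M.card := Finset.card_filter_add_card_filter_not _
  have hMS1 : MS.card ≤ 1 := by
    rw [Finset.card_le_one]
    intro e he f hf
    by_contra hef
    rw [hMSdef, Finset.mem_filter] at he hf
    obtain ⟨heM, hetouch⟩ := he
    obtain ⟨hfM, hftouch⟩ := hf
    obtain ⟨u, v, hedef, hadj, huA, hvA⟩ := hedge e heM
    obtain ⟨u', v', hfdef, hadj', huA', hvA'⟩ := hedge f hfM
    have hcond := hM.2 e heM f hfM hef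
    have hne : ∀ x y : V, x ∈ e → y ∈ f → x = y → False :=
      fun x y hx hy hxy => (hcond x hx y hy).1 hxy
    have hnadj : ∀ x y : V, x ∈ e → y ∈ f → T.Adj x y →
        ((x ∈ A ∧ y ∉ A) ∨ (y ∈ A ∧ x ∉ A)) → False := by
      intro x y hx hy h1 h2
      exact (hcond x hx y hy).2 ⟨h1, h2⟩
    have hue : u ∈ e := by rw [hedef]; exact Sym2.mem_iff.2 (Or.inl rfl)
    have hve : v ∈ e := by rw [hedef]; exact Sym2.mem_iff.2 (Or.inr rfl)
    have hu'f : u' ∈ f := by rw [hfdef]; exact Sym2.mem_iff.2 (Or.inl rfl)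
    have hv'f : v' ∈ f := by rw [hfdef]; exact Sym2.mem_iff.2 (Or.inr rfl)
    have htou : u ∈ S ∨ v ∈ S := by
      obtain ⟨x, hx, hxS⟩ := hetouch
      rw [hedef, Sym2.mem_iff] at hx
      rcases hx with rfl | rfl
      · exact Or.inl hxS
      · exact Or.inr hxS
    have htou' : u' ∈ S ∨ v' ∈ S := by
      obtain ⟨x, hx, hxS⟩ := hftouch
      rw [hfdef, Sym2.mem_iff] at hx
      rcases hx with rfl | rfl
      · exact Or.inl hxS
      · exact Or.inr hxS
    have hcl := classify u v hadj huA hvA htou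
    have hcl' := classify u' v' hadj' huA' hvA' htou'
    rcases hcl with ⟨hup, hvp, hinc⟩ | ⟨hup, hvp, hvS, hpn⟩ | ⟨huS, hvp, hvS, ha1, ha2⟩ <;>
      rcases hcl' with ⟨hup', hvp', hinc'⟩ | ⟨hup', hvp', hvS', hpn'⟩ |
        ⟨huS', hvp', hvS', ha1', ha2'⟩
    · -- P, P
      rcases lt_trichotomy (idx u) (idx u') with h | h | h
      · rcases lt_trichotomy (idx v) (idx u') with h2 | h2 | h2
        · exact hAcontra v u' (by rw [keyP v hvp, keyP u' hup', mk4_lt]; omega) hvA huA'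
        · exact hne v u' hve hu'f (hidxinj v u' hvp hup' h2)
        · omega
      · exact hne u u' hue hu'f (hidxinj u u' hup hup' h)
      · rcases lt_trichotomy (idx v') (idx u) with h2 | h2 | h2
        · exact hAcontra v' u (by rw [keyP v' hvp', keyP u hup, mk4_lt]; omega) hvA' huA
        · exact hne u v' hue hv'f (hidxinj v' u hvp' hup h2).symm
        · omega
    · -- P, Y
      rcases lt_trichotomy (idx u') (idx u) with h | h | h
      · exact hAcontra v' u
          (by rw [keyY v' hvp' hvS', keyP u hup, hpn', mk4_lt]; omega) hvA' huA
      · exact hne u u' hue hu'f (hidxinj u u' hup hup' h.symm)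
      · rcases lt_trichotomy (idx v) (idx u') with h2 | h2 | h2
        · exact hAcontra v u' (by rw [keyP v hvp, keyP u' hup', mk4_lt]; omega) hvA huA'
        · exact hne v u' hve hu'f (hidxinj v u' hvp hup' h2)
        · omega
    · -- P, C
      rcases lt_trichotomy (idx (pnbr v')) (idx u) with h | h | h
      · exact hAcontra v' u
          (by rw [keyY v' hvp' hvS', keyP u hup, mk4_lt]; omega) hvA' huA
      · have hpv : pnbr v' = u := hidxinj _ _ (hpnbr v' hvS' hvp').1 hup h
        have hadj2 : T.Adj u v' := hpv ▸ (hpnbr v' hvS' hvp').2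
        exact hnadj u v' hue hv'f hadj2 (Or.inl ⟨huA, hvA'⟩)
      · refine hAcontra v u' ?_ hvA huA'
        rw [keyP v hvp, keyC u' huS', mk4_lt]
        simp only [hiC, hgC, ha2']
        omega
    · -- Y, P
      rcases lt_trichotomy (idx u) (idx u') with h | h | h
      · exact hAcontra v u'
          (by rw [keyY v hvp hvS, keyP u' hup', hpn, mk4_lt]; omega) hvA huA'
      · exact hne u u' hue hu'f (hidxinj u u' hup hup' h)
      · rcases lt_trichotomy (idx v') (idx u) with h2 | h2 | h2
        · exact hAcontra v' u (by rw [keyP v' hvp', keyP u hup, mk4_lt]; omega) hvA' huA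
        · exact hne u v' hue hv'f (hidxinj v' u hvp' hup h2).symm
        · omega
    · -- Y, Y
      rcases lt_trichotomy (idx u) (idx u') with h | h | h
      · exact hAcontra v u'
          (by rw [keyY v hvp hvS, keyP u' hup', hpn, mk4_lt]; omega) hvA huA'
      · exact hne u u' hue hu'f (hidxinj u u' hup hup' h)
      · exact hAcontra v' u
          (by rw [keyY v' hvp' hvS', keyP u hup, hpn', mk4_lt]; omega) hvA' huA
    · -- Y, C
      rcases lt_trichotomy (idx (pnbr v')) (idx u) with h | h | h
      · exact hAcontra v' u
          (by rw [keyY v' hvp' hvS', keyP u hup, mk4_lt]; omega) hvA' huA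
      · have hpv : pnbr v' = u := hidxinj _ _ (hpnbr v' hvS' hvp').1 hup h
        have hadj2 : T.Adj u v' := hpv ▸ (hpnbr v' hvS' hvp').2
        exact hnadj u v' hue hv'f hadj2 (Or.inl ⟨huA, hvA'⟩)
      · refine hAcontra v u' ?_ hvA huA'
        rw [keyY v hvp hvS, keyC u' huS', hpn, mk4_lt]
        simp only [hiC, hgC, ha2']
        omega
    · -- C, P
      rcases lt_trichotomy (idx (pnbr v)) (idx u') with h | h | h
      · exact hAcontra v u'
          (by rw [keyY v hvp hvS, keyP u' hup', mk4_lt]; omega) hvA huA'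
      · have hpv : pnbr v = u' := hidxinj _ _ (hpnbr v hvS hvp).1 hup' h
        have hadj2 : T.Adj u' v := hpv ▸ (hpnbr v hvS hvp).2
        exact hnadj v u' hve hu'f hadj2.symm (Or.inr ⟨huA', hvA⟩)
      · refine hAcontra v' u ?_ hvA' huA
        rw [keyP v' hvp', keyC u huS, mk4_lt]
        simp only [hiC, hgC, ha2]
        omega
    · -- C, Y
      rcases lt_trichotomy (idx (pnbr v)) (idx u') with h | h | h
      · exact hAcontra v u'
          (by rw [keyY v hvp hvS, keyP u' hup', mk4_lt]; omega) hvA huA'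
      · have hpv : pnbr v = u' := hidxinj _ _ (hpnbr v hvS hvp).1 hup' h
        have hadj2 : T.Adj u' v := hpv ▸ (hpnbr v hvS hvp).2
        exact hnadj v u' hve hu'f hadj2.symm (Or.inr ⟨huA', hvA⟩)
      · refine hAcontra v' u ?_ hvA' huA
        rw [keyY v' hvp' hvS', keyC u huS, hpn', mk4_lt]
        simp only [hiC, hgC, ha2]
        omega
    · -- C, C
      by_cases hcc : cOf u huS = cOf u' huS'
      · have h1 : u = u' := by rw [← ha1, ← ha1', hcc]
        exact hne u u' hue hu'f h1
      · by_cases hvv : v = v'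
        · exact hne v v' hve hv'f hvv
        · rcases lt_trichotomy (idx (pnbr v)) (idx (pnbr v')) with h | h | h
          · refine hAcontra v u' ?_ hvA huA'
            rw [keyY v hvp hvS, keyC u' huS', mk4_lt]
            simp only [hiC, hgC, ha2']
            omega
          · rcases Nat.lt_trichotomy (ι v : ℕ) (ι v' : ℕ) with h2 | h2 | h2
            · refine hAcontra v u' ?_ hvA huA'
              rw [keyY v hvp hvS, keyC u' huS', mk4_lt]
              simp only [hiC, hgC, ha2']
              omega
            · exact hvv (hiota v v' h2)
            · refine hAcontra v' u ?_ hvA' huA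
              rw [keyY v' hvp' hvS', keyC u huS, mk4_lt]
              simp only [hiC, hgC, ha2]
              omega
          · refine hAcontra v' u ?_ hvA' huA
            rw [keyY v' hvp' hvS', keyC u huS, mk4_lt]
            simp only [hiC, hgC, ha2]
            omega
  have keylt3 : ∀ (x y : V) (hx : ¬ x ∈ S) (hy : ¬ y ∈ S),
      (iC (cOf x hx) < iC (cOf y hy) ∨ (iC (cOf x hx) = iC (cOf y hy) ∧
        (gC (cOf x hx) < gC (cOf y hy) ∨ (gC (cOf x hx) = gC (cOf y hy) ∧
          dC (cOf x hx) < dC (cOf y hy))))) → key x < key y := by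
    intro x y hx hy h
    rw [keyC x hx, keyC y hy, mk4_lt]
    omega
  have keylt4 : ∀ (x y : V) (hx : ¬ x ∈ S) (hy : ¬ y ∈ S),
      iC (cOf x hx) = iC (cOf y hy) → gC (cOf x hx) = gC (cOf y hy) →
      dC (cOf x hx) = dC (cOf y hy) →
      (σC (cOf x hx) ⟨⟨x, hx⟩, hmemsupp x hx⟩ : ℕ) <
        (σC (cOf y hy) ⟨⟨y, hy⟩, hmemsupp y hy⟩ : ℕ) → key x < key y := by
    intro x y hx hy h1 h2 h3 h4
    rw [keyC x hx, keyC y hy, mk4_lt]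
    omega
  have σC_congr : ∀ (c c' : (T.induce Sᶜ).ConnectedComponent) (h : c = c')
      (x : ↥c.supp) (y : ↥c'.supp), (x : ↥Sᶜ) = (y : ↥Sᶜ) →
      (σC c x : ℕ) = (σC c' y : ℕ) := by
    intro c c' h
    subst h
    intro x y hxy
    rw [Subtype.ext hxy]
  have hMCk : MC.card ≤ k := by
    rcases MC.eq_empty_or_nonempty with hemp | ⟨e₀, he₀⟩
    · rw [hemp]; simp
    · have he₀M : e₀ ∈ M := (Finset.mem_filter.1 he₀).1
      have he₀n := (Finset.mem_filter.1 he₀).2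
      push_neg at he₀n
      obtain ⟨u₀, v₀, he₀def, hadj₀, hu₀A, hv₀A⟩ := hedge e₀ he₀M
      have hu₀S : ¬ u₀ ∈ S := he₀n u₀ (by rw [he₀def]; exact Sym2.mem_iff.2 (Or.inl rfl))
      have hv₀S : ¬ v₀ ∈ S := he₀n v₀ (by rw [he₀def]; exact Sym2.mem_iff.2 (Or.inr rfl))
      set c₀ := cOf u₀ hu₀S with hc₀def
      have hsame : ∀ (x y : V) (hx : ¬ x ∈ S) (hy : ¬ y ∈ S), T.Adj x y →
          cOf x hx = cOf y hy := by
        intro x y hx hy hadj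
        exact SimpleGraph.ConnectedComponent.connectedComponentMk_eq_of_adj
          (show (T.induce Sᶜ).Adj ⟨x, hx⟩ ⟨y, hy⟩ from hadj)
      have hc₀v : cOf v₀ hv₀S = c₀ := (hsame u₀ v₀ hu₀S hv₀S hadj₀).symm
      have hMCmem : ∀ e ∈ MC, ∀ x ∈ e, ¬ x ∈ S := by
        intro e he x hx
        have h2 := (Finset.mem_filter.1 he).2
        push_neg at h2
        exact h2 x hx
      -- every split component is `c₀`
      have hcompeq : ∀ (u v : V) (hu : ¬ u ∈ S) (hv : ¬ v ∈ S), cOf u hu = cOf v hv →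
          u ∈ A → v ∉ A → cOf u hu = c₀ := by
        intro u v hu hv huv huA hvA
        by_contra hcc
        have hdne : dC (cOf u hu) ≠ dC c₀ := by
          intro hdd
          exact hcc (hattdet _ _ (hiota _ _ (by simp only [hdC] at hdd; omega)))
        have e1 : iC (cOf v hv) = iC (cOf u hu) := congrArg iC huv.symm
        have e2 : gC (cOf v hv) = gC (cOf u hu) := congrArg gC huv.symm
        have e3 : dC (cOf v hv) = dC (cOf u hu) := congrArg dC huv.symm
        have f1 : iC (cOf u₀ hu₀S) = iC c₀ := congrArg iC hc₀def.symm
        have f2 : gC (cOf u₀ hu₀S) = gC c₀ := congrArg gC hc₀def.symm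
        have f3 : dC (cOf u₀ hu₀S) = dC c₀ := congrArg dC hc₀def.symm
        have g1 : iC (cOf v₀ hv₀S) = iC c₀ := congrArg iC hc₀v
        have g2 : gC (cOf v₀ hv₀S) = gC c₀ := congrArg gC hc₀v
        have g3 : dC (cOf v₀ hv₀S) = dC c₀ := congrArg dC hc₀v
        rcases (show (iC (cOf u hu) < iC c₀ ∨ (iC (cOf u hu) = iC c₀ ∧
            (gC (cOf u hu) < gC c₀ ∨ (gC (cOf u hu) = gC c₀ ∧
              dC (cOf u hu) < dC c₀)))) ∨
            (iC c₀ < iC (cOf u hu) ∨ (iC c₀ = iC (cOf u hu) ∧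
            (gC c₀ < gC (cOf u hu) ∨ (gC c₀ = gC (cOf u hu) ∧
              dC c₀ < dC (cOf u hu))))) from by omega) with h | h
        · refine hAcontra v u₀ (keylt3 v u₀ hv hu₀S (by omega)) hvA hu₀A
        · refine hAcontra v₀ u (keylt3 v₀ u hv₀S hu (by omega)) hv₀A huA
      -- the initial segment of the component layout
      set B : Finset ↥(c₀.supp) :=
        Finset.univ.filter (fun w => ((w : ↥Sᶜ) : V) ∈ A) with hBdef
      set j := B.card with hjdef
      have hwS : ∀ w : ↥(c₀.supp), ¬ ((w : ↥Sᶜ) : V) ∈ S := fun w => (w : ↥Sᶜ).2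
      have hwc : ∀ w : ↥(c₀.supp), cOf ((w : ↥Sᶜ) : V) (hwS w) = c₀ := by
        intro w
        have h2 := w.2
        rw [SimpleGraph.ConnectedComponent.mem_supp_iff] at h2
        exact h2
      have hσw : ∀ w : ↥(c₀.supp),
          (σC (cOf ((w : ↥Sᶜ) : V) (hwS w)) ⟨⟨((w : ↥Sᶜ) : V), hwS w⟩,
            hmemsupp _ (hwS w)⟩ : ℕ) = (σC c₀ w : ℕ) :=
        fun w => σC_congr _ _ (hwc w) _ w rfl
      have hBdc : ∀ w w' : ↥(c₀.supp), (σC c₀ w : ℕ) ≤ (σC c₀ w' : ℕ) →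
          w' ∈ B → w ∈ B := by
        intro w w' hle hw'B
        rcases eq_or_lt_of_le hle with h | h
        · have : w = w' := (σC c₀).injective (Fin.val_injective h)
          rwa [this]
        · have hklt : key ((w : ↥Sᶜ) : V) < key ((w' : ↥Sᶜ) : V) := by
            refine keylt4 _ _ (hwS w) (hwS w') ?_ ?_ ?_ ?_
            · rw [congrArg iC (hwc w), congrArg iC (hwc w')]
            · rw [congrArg gC (hwc w), congrArg gC (hwc w')]
            · rw [congrArg dC (hwc w), congrArg dC (hwc w')]
            · rw [hσw w, hσw w']; exact h
          rw [hBdef, Finset.mem_filter] at hw'B ⊢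
          exact ⟨Finset.mem_univ w, hdc _ _ hklt hw'B.2⟩
      have hseg := initseg (σC c₀) B hBdc
      -- j is in range
      have hw₀B : (⟨⟨u₀, hu₀S⟩, hmemsupp u₀ hu₀S⟩ : ↥(c₀.supp)) ∈ B := by
        rw [hBdef, Finset.mem_filter]
        exact ⟨Finset.mem_univ _, hu₀A⟩
      have hw₁ : (⟨v₀, hv₀S⟩ : ↥Sᶜ) ∈ c₀.supp :=
        (SimpleGraph.ConnectedComponent.mem_supp_iff _ _).2 hc₀v
      have hw₁B : (⟨⟨v₀, hv₀S⟩, hw₁⟩ : ↥(c₀.supp)) ∉ B := by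
        rw [hBdef, Finset.mem_filter]
        rintro ⟨-, h⟩
        exact hv₀A h
      have hj1 : 1 ≤ j := by
        rw [hjdef]
        exact Finset.card_pos.2 ⟨_, hw₀B⟩
      have hj2 : j < Fintype.card ↥(c₀.supp) := by
        have hle : j ≤ Fintype.card ↥(c₀.supp) := by
          rw [hjdef, ← Finset.card_univ]
          exact Finset.card_le_card (Finset.subset_univ B)
        rcases eq_or_lt_of_le hle with h | h
        · exact absurd (Finset.eq_univ_of_card B h ▸ Finset.mem_univ _ : _ ∈ B) hw₁B
        · exact h
      -- membership facts for matched edges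
      have hedgedata : ∀ e ∈ MC, ∃ w w' : ↥(c₀.supp),
          e = s(((w : ↥Sᶜ) : V), ((w' : ↥Sᶜ) : V)) := by
        intro e he
        obtain ⟨u, v, hedef, hadj, huA, hvA⟩ := hedge e (Finset.filter_subset _ M he)
        have hu : ¬ u ∈ S := hMCmem e he u (by rw [hedef]; exact Sym2.mem_iff.2 (Or.inl rfl))
        have hv : ¬ v ∈ S := hMCmem e he v (by rw [hedef]; exact Sym2.mem_iff.2 (Or.inr rfl))
        have hcu : cOf u hu = c₀ := hcompeq u v hu hv (hsame u v hu hv hadj) huA hvA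
        have hcv : cOf v hv = c₀ := ((hsame u v hu hv hadj).symm).trans hcu
        exact ⟨⟨⟨u, hu⟩, (SimpleGraph.ConnectedComponent.mem_supp_iff _ _).2 hcu⟩,
          ⟨⟨v, hv⟩, (SimpleGraph.ConnectedComponent.mem_supp_iff _ _).2 hcv⟩, hedef⟩
      -- adjacency correspondence
      have hadjiff : ∀ w w' : ↥(c₀.supp),
          (cutGraph ((T.induce Sᶜ).induce c₀.supp) (σC c₀) j).Adj w w' ↔
          (crossGraph T A).Adj ((w : ↥Sᶜ) : V) ((w' : ↥Sᶜ) : V) := by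
        intro w w'
        constructor
        · rintro ⟨hadjc, hcut⟩
          refine ⟨hadjc, ?_⟩
          rcases hcut with ⟨h1, h2⟩ | ⟨h1, h2⟩
          · left
            refine ⟨(Finset.mem_filter.1 ((hseg w).2 h1)).2, fun hA => ?_⟩
            have := (hseg w').1 (Finset.mem_filter.2 ⟨Finset.mem_univ _, hA⟩)
            omega
          · right
            refine ⟨(Finset.mem_filter.1 ((hseg w').2 h1)).2, fun hA => ?_⟩
            have := (hseg w).1 (Finset.mem_filter.2 ⟨Finset.mem_univ _, hA⟩)
            omega
        · rintro ⟨hadjc, hcross⟩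
          refine ⟨hadjc, ?_⟩
          rcases hcross with ⟨h1, h2⟩ | ⟨h1, h2⟩
          · left
            have hm := (hseg w).1 (Finset.mem_filter.2 ⟨Finset.mem_univ _, h1⟩)
            have hm2 : ¬ ((σC c₀ w' : ℕ) < j) := fun hc =>
              h2 (Finset.mem_filter.1 ((hseg w').2 hc)).2
            omega
          · right
            have hm := (hseg w').1 (Finset.mem_filter.2 ⟨Finset.mem_univ _, h1⟩)
            have hm2 : ¬ ((σC c₀ w : ℕ) < j) := fun hc =>
              h2 (Finset.mem_filter.1 ((hseg w).2 hc)).2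
            omega
      have hMCmatch : IsInducedMatching (crossGraph T A) MC := by
        constructor
        · intro e he
          exact hM.1 (Finset.mem_coe.2 (Finset.filter_subset _ M (Finset.mem_coe.1 he)))
        · intro e he f hf
          exact hM.2 e (Finset.filter_subset _ M he) f (Finset.filter_subset _ M hf)
      obtain ⟨M', hM', hMcard⟩ := transfer_matching (crossGraph T A)
        (cutGraph ((T.induce Sᶜ).induce c₀.supp) (σC c₀) j)
        (fun w => ((w : ↥Sᶜ) : V))
        (fun w w' h => Subtype.ext (Subtype.ext h)) MC hMCmatch hadjiff hedgedata
      have h1 : MC.card ≤ mim (cutGraph ((T.induce Sᶜ).induce c₀.supp) (σC c₀) j) :=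
        hMcard ▸ card_le_mim hM'
      have h2 : mim (cutGraph ((T.induce Sᶜ).induce c₀.supp) (σC c₀) j) ≤
          mw ((T.induce Sᶜ).induce c₀.supp) (σC c₀) :=
        mim_cutGraph_le_mw _ _ (Finset.mem_Ico.2 ⟨hj1, hj2⟩)
      rw [hσC c₀] at h2
      exact h1.trans (h2.trans (hcomp c₀))
  omega

end LMW
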